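/- Let S be a Boolean inverse monoid and let W ⊆ 𝒢(S) be a compact open subset such that both maps W → Ê(S) sending [χ,x] to x and sending [χ,x] to α_χ(x) are well defined and injective on W (i.e., W is a compact open bisection of 𝒢(S)). Then there exists ψ ∈ S with W = U_ψ. In particular, together with U_φ · U_ψ = U_{φψ} and the injectivity of φ ↦ U_φ, the map ε(φ) := U_φ is a semigroup isomorphism from S onto the inverse semigroup of all compact open bisections of 𝒢(S). -/

import Mathlib

universe u

namespace BIM

class InverseSemigroup (S : Type u) extends Semigroup S, Inv S where
  mul_inv_mul : ∀ φ : S, φ * φ⁻¹ * φ = φ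
  inv_mul_inv : ∀ φ : S, φ⁻¹ * φ * φ⁻¹ = φ⁻¹
  inv_unique : ∀ φ ψ : S, φ * ψ * φ = φ → ψ * φ * ψ = ψ → ψ = φ⁻¹

variable {S : Type u}

section InvSg
variable [InverseSemigroup S]

def cle (φ ψ : S) : Prop := φ = ψ * φ⁻¹ * φ

lemma mim (φ : S) : φ * φ⁻¹ * φ = φ := InverseSemigroup.mul_inv_mul φ
lemma imi (φ : S) : φ⁻¹ * φ * φ⁻¹ = φ⁻¹ := InverseSemigroup.inv_mul_inv φ

lemma inv_inv' (φ : S) : φ⁻¹⁻¹ = φ :=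
  (InverseSemigroup.inv_unique φ⁻¹ φ (imi φ) (mim φ)).symm

lemma idem_inv {p : S} (hp : p * p = p) : p⁻¹ = p :=
  (InverseSemigroup.inv_unique p p (by rw [hp, hp]) (by rw [hp, hp])).symm

lemma inv_mul_idem (φ : S) : (φ⁻¹ * φ) * (φ⁻¹ * φ) = φ⁻¹ * φ := by
  rw [mul_assoc φ⁻¹ φ (φ⁻¹ * φ), ← mul_assoc φ φ⁻¹ φ, mim]

lemma mul_inv_idem (φ : S) : (φ * φ⁻¹) * (φ * φ⁻¹) = φ * φ⁻¹ := by
  rw [mul_assoc φ φ⁻¹ (φ * φ⁻¹), ← mul_assoc φ⁻¹ φ φ⁻¹, imi]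

lemma idem_absorb {e : S} (he : e * e = e) (x : S) : e * (e * x) = e * x := by
  rw [← mul_assoc, he]

lemma mul_idem {e f : S} (he : e * e = e) (hf : f * f = f) :
    (e * f) * (e * f) = e * f := by
  set a := (e * f)⁻¹ with ha
  have k1 : (e * f) * a * (e * f) = e * f := mim (e * f)
  have k2 : a * (e * f) * a = a := imi (e * f)
  have k2x : ∀ x : S, a * (e * (f * (a * x))) = a * x := by
    intro x
    have := congrArg (· * x) k2
    simp only [mul_assoc] at this
    simpa [mul_assoc] using this
  have hme : (e * f) * (f * (a * e)) * (e * f) = e * f := by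
    have k1' : e * (f * (a * (e * f))) = e * f := by
      simpa [mul_assoc] using k1
    calc (e * f) * (f * (a * e)) * (e * f)
        = e * (f * (f * (a * (e * (e * f))))) := by simp only [mul_assoc]
      _ = e * (f * (a * (e * (e * f)))) := by rw [idem_absorb hf]
      _ = e * (f * (a * (e * f))) := by rw [idem_absorb he]
      _ = e * f := k1'
  have hmh : (f * (a * e)) * (e * f) * (f * (a * e)) = f * (a * e) := by
    calc (f * (a * e)) * (e * f) * (f * (a * e))
        = f * (a * (e * (e * (f * (f * (a * e)))))) := by simp only [mul_assoc]
      _ = f * (a * (e * (f * (f * (a * e))))) := by rw [idem_absorb he]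
      _ = f * (a * (e * (f * (a * e)))) := by rw [idem_absorb hf]
      _ = f * (a * e) := by rw [k2x]
  have hha : f * (a * e) = a := InverseSemigroup.inv_unique (e * f) (f * (a * e)) hme hmh
  have hh : (f * (a * e)) * (f * (a * e)) = f * (a * e) := by
    calc (f * (a * e)) * (f * (a * e))
        = f * (a * (e * (f * (a * e)))) := by simp only [mul_assoc]
      _ = f * (a * e) := by rw [k2x]
  have haa : a * a = a := by rw [← hha]; exact hh
  have hefa : e * f = a := by
    rw [← idem_inv haa, ha, inv_inv']
  rw [hefa]; exact haa

lemma idem_comm {e f : S} (he : e * e = e) (hf : f * f = f) : e * f = f * e := by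
  have hef : (e * f) * (e * f) = e * f := mul_idem he hf
  have hfe : (f * e) * (f * e) = f * e := mul_idem hf he
  have h1 : (e * f) * (f * e) * (e * f) = e * f := by
    calc (e * f) * (f * e) * (e * f)
        = e * (f * (f * (e * (e * f)))) := by simp only [mul_assoc]
      _ = e * (f * (e * (e * f))) := by rw [idem_absorb hf]
      _ = e * (f * (e * f)) := by rw [idem_absorb he]
      _ = (e * f) * (e * f) := by simp only [mul_assoc]
      _ = e * f := hef
  have h2 : (f * e) * (e * f) * (f * e) = f * e := by
    calc (f * e) * (e * f) * (f * e)
        = f * (e * (e * (f * (f * e)))) := by simp only [mul_assoc]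
      _ = f * (e * (f * (f * e))) := by rw [idem_absorb he]
      _ = f * (e * (f * e)) := by rw [idem_absorb hf]
      _ = (f * e) * (f * e) := by simp only [mul_assoc]
      _ = f * e := hfe
  have : f * e = (e * f)⁻¹ := InverseSemigroup.inv_unique (e * f) (f * e) h1 h2
  rw [this, idem_inv hef]

lemma conj_idem (φ : S) {p : S} (hp : p * p = p) :
    (φ⁻¹ * p * φ) * (φ⁻¹ * p * φ) = φ⁻¹ * p * φ := by
  have hcomm : p * (φ * φ⁻¹) = (φ * φ⁻¹) * p := idem_comm hp (mul_inv_idem φ)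
  calc (φ⁻¹ * p * φ) * (φ⁻¹ * p * φ)
      = φ⁻¹ * (p * (φ * φ⁻¹) * (p * φ)) := by simp only [mul_assoc]
    _ = φ⁻¹ * ((φ * φ⁻¹) * p * (p * φ)) := by rw [hcomm]
    _ = φ⁻¹ * (φ * φ⁻¹) * (p * (p * φ)) := by simp only [mul_assoc]
    _ = φ⁻¹ * (φ * φ⁻¹) * (p * φ) := by rw [idem_absorb hp]
    _ = φ⁻¹ * (p * φ) := by rw [← mul_assoc φ⁻¹ φ φ⁻¹, imi]
    _ = φ⁻¹ * p * φ := by rw [mul_assoc]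

lemma cle_idem_iff {p : S} (q : S) (hp : p * p = p) : cle p q ↔ p = q * p := by
  unfold cle
  rw [idem_inv hp, mul_assoc q p p, hp]

end InvSg

class InverseSemigroupWithZero (S : Type u) extends InverseSemigroup S, Zero S where
  zero_mul' : ∀ φ : S, 0 * φ = 0
  mul_zero' : ∀ φ : S, φ * 0 = 0

def orth [InverseSemigroupWithZero S] (φ ψ : S) : Prop := φ * ψ⁻¹ = 0 ∧ φ⁻¹ * ψ = 0

class AdditiveInvSemigroup (S : Type u) extends InverseSemigroupWithZero S where
  vsup : S → S → S
  cle_vsup_left : ∀ φ ψ : S, orth φ ψ → cle φ (vsup φ ψ)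
  cle_vsup_right : ∀ φ ψ : S, orth φ ψ → cle ψ (vsup φ ψ)
  vsup_cle : ∀ φ ψ χ : S, orth φ ψ → cle φ χ → cle ψ χ → cle (vsup φ ψ) χ
  mul_vsup : ∀ φ ψ χ : S, orth φ ψ → χ * vsup φ ψ = vsup (χ * φ) (χ * ψ)
  vsup_mul : ∀ φ ψ χ : S, orth φ ψ → vsup φ ψ * χ = vsup (φ * χ) (ψ * χ)

abbrev E (S : Type u) [Mul S] : Type u := {p : S // p * p = p}

class BooleanInverseMonoid (S : Type u) extends AdditiveInvSemigroup S where
  vinf : S → S → S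
  vinf_cle_left : ∀ φ ψ : S, cle (vinf φ ψ) φ
  vinf_cle_right : ∀ φ ψ : S, cle (vinf φ ψ) ψ
  cle_vinf : ∀ φ ψ χ : S, cle χ φ → cle χ ψ → cle χ (vinf φ ψ)
  ba : BooleanAlgebra (E S)
  ba_le_iff : ∀ p q : E S, (letI := ba; p ≤ q) ↔ cle p.1 q.1

instance (priority := 100) instBAE [BooleanInverseMonoid S] : BooleanAlgebra (E S) :=
  BooleanInverseMonoid.ba

lemma ba_le [BooleanInverseMonoid S] (p q : E S) : p ≤ q ↔ cle p.1 q.1 :=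
  BooleanInverseMonoid.ba_le_iff p q

section BIMsec
variable [BooleanInverseMonoid S]

lemma E_le_iff (p q : E S) : p ≤ q ↔ p.1 = q.1 * p.1 := by
  rw [ba_le]; exact cle_idem_iff q.1 p.2

/-- In `E S`, the Boolean-algebra meet is given by the semigroup product. -/
lemma inf_coe (p q : E S) : ((p ⊓ q : E S) : S) = p.1 * q.1 := by
  have hm : (p.1 * q.1) * (p.1 * q.1) = p.1 * q.1 := mul_idem p.2 q.2
  have h1 : (⟨p.1 * q.1, hm⟩ : E S) ≤ p := by
    rw [E_le_iff]
    show p.1 * q.1 = p.1 * (p.1 * q.1)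
    rw [← mul_assoc, p.2]
  have h2 : (⟨p.1 * q.1, hm⟩ : E S) ≤ q := by
    rw [E_le_iff]
    show p.1 * q.1 = q.1 * (p.1 * q.1)
    rw [← mul_assoc, idem_comm q.2 p.2, mul_assoc, q.2]
  have h3 : p ⊓ q ≤ (⟨p.1 * q.1, hm⟩ : E S) := by
    have hp' : (p ⊓ q : E S).1 = p.1 * (p ⊓ q).1 := (E_le_iff _ _).1 inf_le_left
    have hq' : (p ⊓ q : E S).1 = q.1 * (p ⊓ q).1 := (E_le_iff _ _).1 inf_le_right
    rw [E_le_iff]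
    show (p ⊓ q : E S).1 = p.1 * q.1 * (p ⊓ q).1
    rw [mul_assoc, ← hq', ← hp']
  have : p ⊓ q = (⟨p.1 * q.1, hm⟩ : E S) := le_antisymm h3 (le_inf h1 h2)
  exact congrArg Subtype.val this

/-- A character on `E S`: a Boolean algebra homomorphism into the two-element
Boolean algebra. -/
structure Character (S : Type u) [BooleanInverseMonoid S] where
  toFun : E S → Bool
  map_inf' : ∀ p q : E S, toFun (p ⊓ q) = (toFun p && toFun q)
  map_sup' : ∀ p q : E S, toFun (p ⊔ q) = (toFun p || toFun q)
  map_top' : toFun ⊤ = true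
  map_bot' : toFun ⊥ = false

lemma Character.ext {x y : Character S} (h : ∀ p, x.toFun p = y.toFun p) : x = y := by
  cases x; cases y
  congr 1
  funext p
  exact h p

instance : TopologicalSpace (Character S) :=
  TopologicalSpace.induced (fun x : Character S => x.toFun) inferInstance

/-- `Ê(S)_φ`, the set of characters `x` with `x(φ⁻¹φ) = 1`. -/
def EhatAt (φ : S) : Set (Character S) :=
  {x | x.toFun ⟨φ⁻¹ * φ, inv_mul_idem φ⟩ = true}

/-- `α_φ(x)` as a raw function on idempotents: `p ↦ x(φ⁻¹ p φ)`. -/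
def alphaFun (φ : S) (x : Character S) : E S → Bool :=
  fun p => x.toFun ⟨φ⁻¹ * p.1 * φ, conj_idem φ p.2⟩

/-- The underlying set `S ∗ Ê(S)` of pairs `(φ, x)` with `x ∈ Ê(S)_φ`. -/
abbrev SStar (S : Type u) [BooleanInverseMonoid S] : Type u :=
  {z : S × Character S // z.2 ∈ EhatAt z.1}

/-- The equivalence relation defining `𝒢(S)`. -/
def rel (a b : SStar S) : Prop :=
  a.1.2 = b.1.2 ∧ ∃ p : E S, a.1.2.toFun p = true ∧ a.1.1 * p.1 = b.1.1 * p.1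

lemma rel_equivalence : Equivalence (rel (S := S)) := by
  constructor
  · intro a
    exact ⟨rfl, ⟨⊤, a.1.2.map_top', rfl⟩⟩
  · rintro a b ⟨hxy, p, hp1, hp2⟩
    exact ⟨hxy.symm, p, by rw [← hxy]; exact hp1, hp2.symm⟩
  · rintro a b c ⟨hxy, p, hp1, hp2⟩ ⟨hyz, q, hq1, hq2⟩
    refine ⟨hxy.trans hyz, ⟨⟨p.1 * q.1, mul_idem p.2 q.2⟩, ?_, ?_⟩⟩
    · have : (⟨p.1 * q.1, mul_idem p.2 q.2⟩ : E S) = p ⊓ q :=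
        Subtype.ext (inf_coe p q).symm
      rw [this, a.1.2.map_inf', hp1]
      rw [hxy]
      rw [hq1]
      rfl
    · show a.1.1 * (p.1 * q.1) = c.1.1 * (p.1 * q.1)
      have h1 : a.1.1 * (p.1 * q.1) = b.1.1 * (p.1 * q.1) := by
        rw [← mul_assoc, hp2, mul_assoc]
      have h2 : b.1.1 * (p.1 * q.1) = c.1.1 * (p.1 * q.1) := by
        rw [idem_comm p.2 q.2, ← mul_assoc, hq2, mul_assoc]
      rw [h1, h2]

instance gpdSetoid (S : Type u) [BooleanInverseMonoid S] : Setoid (SStar S) :=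
  ⟨rel, rel_equivalence⟩

/-- The groupoid `𝒢(S)` as a set: the quotient of `S ∗ Ê(S)` by `∼`. -/
def Gpd (S : Type u) [BooleanInverseMonoid S] : Type u := Quotient (gpdSetoid S)

/-- The class `[φ, x]` in `𝒢(S)`. -/
def mk (φ : S) (x : Character S) (hx : x ∈ EhatAt φ) : Gpd S :=
  Quotient.mk (gpdSetoid S) ⟨(φ, x), hx⟩

/-- The basic set `U_φ = {[φ, x] : x ∈ Ê(S)_φ}`. -/
def U (φ : S) : Set (Gpd S) := {g | ∃ (x : Character S) (hx : x ∈ EhatAt φ), g = mk φ x hx}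

/-- The topology on `𝒢(S)` generated by the sets `U_φ`. -/
instance : TopologicalSpace (Gpd S) :=
  TopologicalSpace.generateFrom {V : Set (Gpd S) | ∃ φ : S, V = U φ}

end BIMsec

end BIM


open BIM

/-- A compact open bisection of 𝒢(S): a compact open subset on which both
[χ,x] ↦ x and [χ,x] ↦ α_χ(x) are well defined and injective. -/
def IsCompactOpenBisection {S : Type u} [BooleanInverseMonoid S] (W : Set (Gpd S)) : Prop :=
  IsCompact W ∧ IsOpen W ∧
  ∀ (χ χ' : S) (x x' : Character S) (hx : x ∈ EhatAt χ) (hx' : x' ∈ EhatAt χ'),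
    mk χ x hx ∈ W → mk χ' x' hx' ∈ W →
      ((mk χ x hx = mk χ' x' hx' → x = x') ∧
       (mk χ x hx = mk χ' x' hx' → alphaFun χ x = alphaFun χ' x') ∧
       (x = x' → mk χ x hx = mk χ' x' hx') ∧
       (alphaFun χ x = alphaFun χ' x' → mk χ x hx = mk χ' x' hx'))


-- ========================= AUXILIARY DEVELOPMENT =========================
namespace BIM

section InvAux
variable {S : Type u} [InverseSemigroup S]

-- ===== stage A =====

lemma swap_mid {e f : S} (he : e * e = e) (hf : f * f = f) (x : S) :
    e * (f * x) = f * (e * x) := by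
  rw [← mul_assoc, idem_comm he hf, mul_assoc]

lemma mul_inv_rev' (φ ψ : S) : (φ * ψ)⁻¹ = ψ⁻¹ * φ⁻¹ := by
  have h1 : (φ * ψ) * (ψ⁻¹ * φ⁻¹) * (φ * ψ) = φ * ψ := by
    have : φ * ((ψ * ψ⁻¹) * ((φ⁻¹ * φ) * ψ)) = φ * ψ := by
      rw [swap_mid (mul_inv_idem ψ) (inv_mul_idem φ)]
      rw [show (ψ * ψ⁻¹) * ψ = ψ from mim ψ]
      rw [← mul_assoc, ← mul_assoc, mim]
    calc (φ * ψ) * (ψ⁻¹ * φ⁻¹) * (φ * ψ)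
        = φ * ((ψ * ψ⁻¹) * ((φ⁻¹ * φ) * ψ)) := by simp only [mul_assoc]
      _ = φ * ψ := this
  have h2 : (ψ⁻¹ * φ⁻¹) * (φ * ψ) * (ψ⁻¹ * φ⁻¹) = ψ⁻¹ * φ⁻¹ := by
    have : ψ⁻¹ * ((φ⁻¹ * φ) * ((ψ * ψ⁻¹) * φ⁻¹)) = ψ⁻¹ * φ⁻¹ := by
      rw [swap_mid (inv_mul_idem φ) (mul_inv_idem ψ)]
      rw [show (φ⁻¹ * φ) * φ⁻¹ = φ⁻¹ from by rw [mul_assoc, ← mul_assoc φ⁻¹ φ φ⁻¹, imi]]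
      rw [← mul_assoc, ← mul_assoc, imi]
    calc (ψ⁻¹ * φ⁻¹) * (φ * ψ) * (ψ⁻¹ * φ⁻¹)
        = ψ⁻¹ * ((φ⁻¹ * φ) * ((ψ * ψ⁻¹) * φ⁻¹)) := by simp only [mul_assoc]
      _ = ψ⁻¹ * φ⁻¹ := this
  exact (InverseSemigroup.inv_unique (φ * ψ) (ψ⁻¹ * φ⁻¹) h1 h2).symm

lemma mul_dom (φ : S) : φ * (φ⁻¹ * φ) = φ := by rw [← mul_assoc]; exact mim φ
lemma ran_mul (φ : S) : (φ * φ⁻¹) * φ = φ := mim φ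

lemma cle_refl' (φ : S) : cle φ φ := (mim φ).symm

lemma cle_iff_alt (φ ψ : S) : cle φ ψ ↔ φ = ψ * (φ⁻¹ * φ) := by
  unfold cle; rw [mul_assoc]

lemma cle_alt {φ ψ : S} (h : cle φ ψ) : φ = ψ * (φ⁻¹ * φ) :=
  (cle_iff_alt φ ψ).mp h

lemma inv_dom_eq {φ ψ : S} (h : cle φ ψ) : φ⁻¹ = (φ⁻¹ * φ) * ψ⁻¹ := by
  conv_lhs => rw [cle_alt h]
  rw [mul_inv_rev', idem_inv (inv_mul_idem φ)]

lemma cle_dom {φ ψ : S} (h : cle φ ψ) : cle (φ⁻¹ * φ) (ψ⁻¹ * ψ) := by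
  rw [cle_idem_iff _ (inv_mul_idem φ)]
  have he := inv_mul_idem φ
  calc φ⁻¹ * φ = ((φ⁻¹ * φ) * ψ⁻¹) * (ψ * (φ⁻¹ * φ)) := by
        rw [← inv_dom_eq h, ← cle_alt h]
    _ = (φ⁻¹ * φ) * ((ψ⁻¹ * ψ) * (φ⁻¹ * φ)) := by simp only [mul_assoc]
    _ = (ψ⁻¹ * ψ) * ((φ⁻¹ * φ) * (φ⁻¹ * φ)) := swap_mid he (inv_mul_idem ψ) _
    _ = (ψ⁻¹ * ψ) * (φ⁻¹ * φ) := by rw [he]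

lemma cle_ran {φ ψ : S} (h : cle φ ψ) : cle (φ * φ⁻¹) (ψ * ψ⁻¹) := by
  rw [cle_idem_iff _ (mul_inv_idem φ)]
  have key : φ * φ⁻¹ = ψ * ((φ⁻¹ * φ) * ψ⁻¹) := by
    have e1 : φ * φ⁻¹ = (ψ * (φ⁻¹ * φ)) * ((φ⁻¹ * φ) * ψ⁻¹) := by
      rw [← inv_dom_eq h, ← cle_alt h]
    rw [e1]
    calc (ψ * (φ⁻¹ * φ)) * ((φ⁻¹ * φ) * ψ⁻¹)
        = ψ * (((φ⁻¹ * φ) * (φ⁻¹ * φ)) * ψ⁻¹) := by simp only [mul_assoc]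
      _ = ψ * ((φ⁻¹ * φ) * ψ⁻¹) := by rw [inv_mul_idem]
  calc φ * φ⁻¹ = ψ * ((φ⁻¹ * φ) * ψ⁻¹) := key
    _ = (ψ * ψ⁻¹) * (ψ * ((φ⁻¹ * φ) * ψ⁻¹)) := by
        simp only [← mul_assoc]; rw [mim]
    _ = (ψ * ψ⁻¹) * (φ * φ⁻¹) := by rw [← key]

lemma cle_mul_idem' (φ : S) {p : S} (hp : p * p = p) : cle (φ * p) φ := by
  show φ * p = φ * (φ * p)⁻¹ * (φ * p)
  rw [mul_inv_rev', idem_inv hp]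
  calc φ * p = φ * ((φ⁻¹ * φ) * (p * p)) := by rw [hp, ← mul_assoc, mul_dom]
    _ = φ * (p * ((φ⁻¹ * φ) * p)) := by rw [swap_mid (inv_mul_idem φ) hp]
    _ = φ * (p * φ⁻¹) * (φ * p) := by simp only [mul_assoc]

lemma cle_trans' {φ ψ χ : S} (h1 : cle φ ψ) (h2 : cle ψ χ) : cle φ χ := by
  rw [cle_iff_alt]
  calc φ = ψ * (φ⁻¹ * φ) := cle_alt h1
    _ = (χ * (ψ⁻¹ * ψ)) * (φ⁻¹ * φ) := by rw [← cle_alt h2]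
    _ = χ * ((ψ⁻¹ * ψ) * (φ⁻¹ * φ)) := mul_assoc _ _ _
    _ = χ * (φ⁻¹ * φ) := by
        rw [← (cle_idem_iff _ (inv_mul_idem φ)).mp (cle_dom h1)]

lemma idem_antisymm {p q : S} (hp : p * p = p) (hq : q * q = q)
    (h1 : p = q * p) (h2 : q = p * q) : p = q := by
  rw [h1, idem_comm hq hp, ← h2]

lemma cle_antisymm' {φ ψ : S} (h1 : cle φ ψ) (h2 : cle ψ φ) : φ = ψ := by
  have hd : φ⁻¹ * φ = ψ⁻¹ * ψ :=
    idem_antisymm (inv_mul_idem φ) (inv_mul_idem ψ)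
      ((cle_idem_iff _ (inv_mul_idem φ)).mp (cle_dom h1))
      ((cle_idem_iff _ (inv_mul_idem ψ)).mp (cle_dom h2))
  rw [cle_alt h1, hd, mul_dom]


end InvAux


section ZeroAux
variable {S : Type u} [InverseSemigroupWithZero S]

lemma zmul (φ : S) : (0 : S) * φ = 0 := InverseSemigroupWithZero.zero_mul' φ
lemma mulz (φ : S) : φ * (0 : S) = 0 := InverseSemigroupWithZero.mul_zero' φ

lemma zero_inv' : (0 : S)⁻¹ = 0 := idem_inv (zmul 0)

lemma eq_zero_of_dom_zero {φ : S} (h : φ⁻¹ * φ = 0) : φ = 0 := by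
  rw [← mim φ, mul_assoc, h, mulz]

lemma orth_symm {φ ψ : S} (h : orth φ ψ) : orth ψ φ := by
  constructor
  · have : (φ * ψ⁻¹)⁻¹ = (0 : S)⁻¹ := by rw [h.1]
    rwa [mul_inv_rev', inv_inv', zero_inv'] at this
  · have : (φ⁻¹ * ψ)⁻¹ = (0 : S)⁻¹ := by rw [h.2]
    rwa [mul_inv_rev', inv_inv', zero_inv'] at this

lemma orth_idem_of_mul_zero {p q : S} (hp : p * p = p) (hq : q * q = q)
    (h : p * q = 0) : orth p q := by
  refine ⟨?_, ?_⟩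
  · rw [idem_inv hq]; exact h
  · rw [idem_inv hp]; exact h

lemma mul_zero_of_orth {φ ψ : S} (h : orth φ ψ) : φ⁻¹ * ψ = 0 := h.2

lemma cle_zero (φ : S) : cle (0 : S) φ := by
  show (0 : S) = φ * (0:S)⁻¹ * 0
  rw [zero_inv', mulz]

end ZeroAux

section AddAux
variable {S : Type u} [AdditiveInvSemigroup S]

lemma orth_zero_right (φ : S) : orth φ (0 : S) := by
  refine ⟨?_, ?_⟩
  · rw [zero_inv', mulz]
  · rw [mulz]

lemma vsup_zero_right (φ : S) : AdditiveInvSemigroup.vsup φ (0 : S) = φ := by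
  refine cle_antisymm' ?_ (AdditiveInvSemigroup.cle_vsup_left φ 0 (orth_zero_right φ))
  exact AdditiveInvSemigroup.vsup_cle φ 0 φ (orth_zero_right φ) (cle_refl' φ) (cle_zero φ)

lemma vsup_zero_left (φ : S) : AdditiveInvSemigroup.vsup (0 : S) φ = φ := by
  refine cle_antisymm' ?_ (AdditiveInvSemigroup.cle_vsup_right 0 φ (orth_symm (orth_zero_right φ)))
  exact AdditiveInvSemigroup.vsup_cle 0 φ φ (orth_symm (orth_zero_right φ)) (cle_zero φ) (cle_refl' φ)

lemma vsup_idem {p q : S} (hp : p * p = p) (hq : q * q = q) (ho : orth p q) :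
    AdditiveInvSemigroup.vsup p q * AdditiveInvSemigroup.vsup p q
      = AdditiveInvSemigroup.vsup p q := by
  have hpq : p * q = 0 := by have := ho.2; rwa [idem_inv hp] at this
  have hqp : q * p = 0 := by have := (orth_symm ho).2; rwa [idem_inv hq] at this
  rw [AdditiveInvSemigroup.vsup_mul p q _ ho]
  rw [AdditiveInvSemigroup.mul_vsup p q p ho, AdditiveInvSemigroup.mul_vsup p q q ho]
  rw [hp, hpq, hqp, hq, vsup_zero_right, vsup_zero_left]

lemma orth_dom {φ ψ : S} (ho : orth φ ψ) : orth (φ⁻¹ * φ) (ψ⁻¹ * ψ) := by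
  apply orth_idem_of_mul_zero (inv_mul_idem φ) (inv_mul_idem ψ)
  have : φ⁻¹ * (φ * ψ⁻¹) * ψ = φ⁻¹ * 0 * ψ := by rw [ho.1]
  rw [mulz, zmul] at this
  calc (φ⁻¹ * φ) * (ψ⁻¹ * ψ) = φ⁻¹ * (φ * ψ⁻¹) * ψ := by simp only [mul_assoc]
    _ = 0 := this

lemma dom_vsup {φ ψ : S} (ho : orth φ ψ) :
    (AdditiveInvSemigroup.vsup φ ψ)⁻¹ * AdditiveInvSemigroup.vsup φ ψ
      = AdditiveInvSemigroup.vsup (φ⁻¹ * φ) (ψ⁻¹ * ψ) := by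
  set θ := AdditiveInvSemigroup.vsup φ ψ with hθ
  set s := AdditiveInvSemigroup.vsup (φ⁻¹ * φ) (ψ⁻¹ * ψ) with hs
  have hθφ : θ * (φ⁻¹ * φ) = φ := (cle_alt (AdditiveInvSemigroup.cle_vsup_left φ ψ ho)).symm
  have hθψ : θ * (ψ⁻¹ * ψ) = ψ := (cle_alt (AdditiveInvSemigroup.cle_vsup_right φ ψ ho)).symm
  have hθs : θ * s = θ := by
    rw [hs, AdditiveInvSemigroup.mul_vsup _ _ _ (orth_dom ho), hθφ, hθψ]
  have hsidem : s * s = s := vsup_idem (inv_mul_idem φ) (inv_mul_idem ψ) (orth_dom ho)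
  have h1 : cle (θ⁻¹ * θ) s := by
    rw [cle_idem_iff _ (inv_mul_idem θ)]
    have hinv : θ⁻¹ = s * θ⁻¹ := by
      conv_lhs => rw [← hθs]
      rw [mul_inv_rev', idem_inv hsidem]
    calc θ⁻¹ * θ = (s * θ⁻¹) * θ := by rw [← hinv]
      _ = s * (θ⁻¹ * θ) := mul_assoc _ _ _
  have h2 : cle s (θ⁻¹ * θ) :=
    AdditiveInvSemigroup.vsup_cle _ _ _ (orth_dom ho)
      (cle_dom (AdditiveInvSemigroup.cle_vsup_left φ ψ ho))
      (cle_dom (AdditiveInvSemigroup.cle_vsup_right φ ψ ho))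
  exact cle_antisymm' h1 h2

end AddAux

section EAux
variable {S : Type u} [BooleanInverseMonoid S]

lemma bot_coe : ((⊥ : E S) : S) = 0 := by
  have h1 : (⟨(0 : S), zmul 0⟩ : E S) ≤ ⊥ := by
    rw [E_le_iff]
    show (0 : S) = (⊥ : E S).1 * 0
    rw [mulz]
  have := le_antisymm h1 bot_le
  rw [← this]

lemma top_mul' (φ : S) : ((⊤ : E S) : S) * φ = φ := by
  have h1 : (⟨φ * φ⁻¹, mul_inv_idem φ⟩ : E S) ≤ ⊤ := le_top
  rw [E_le_iff] at h1
  calc ((⊤ : E S) : S) * φ = (⊤ : E S).1 * ((φ * φ⁻¹) * φ) := by rw [mim]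
    _ = ((⊤ : E S).1 * (φ * φ⁻¹)) * φ := (mul_assoc _ _ _).symm
    _ = (φ * φ⁻¹) * φ := by rw [← h1]
    _ = φ := mim φ

lemma mul_top' (φ : S) : φ * ((⊤ : E S) : S) = φ := by
  have h1 : (⟨φ⁻¹ * φ, inv_mul_idem φ⟩ : E S) ≤ ⊤ := le_top
  rw [E_le_iff] at h1
  have hc : (φ⁻¹ * φ) * (⊤ : E S).1 = φ⁻¹ * φ := by
    rw [idem_comm (inv_mul_idem φ) (⊤ : E S).2, ← h1]
  calc φ * (⊤ : E S).1 = (φ * (φ⁻¹ * φ)) * (⊤ : E S).1 := by rw [mul_dom]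
    _ = φ * ((φ⁻¹ * φ) * (⊤ : E S).1) := mul_assoc _ _ _
    _ = φ * (φ⁻¹ * φ) := by rw [hc]
    _ = φ := mul_dom φ

lemma disj_mul_zero {p q : E S} (h : Disjoint p q) : (p : S) * q = 0 := by
  have : p ⊓ q = ⊥ := h.eq_bot
  calc (p : S) * q = ((p ⊓ q : E S) : S) := (inf_coe p q).symm
    _ = 0 := by rw [this, bot_coe]

lemma orth_of_disj {p q : E S} (h : Disjoint p q) : orth (p : S) q :=
  orth_idem_of_mul_zero p.2 q.2 (disj_mul_zero h)

lemma sup_coe_of_disj {p q : E S} (h : Disjoint p q) :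
    ((p ⊔ q : E S) : S) = AdditiveInvSemigroup.vsup (p : S) q := by
  have ho := orth_of_disj h
  have hidem := vsup_idem p.2 q.2 ho
  set v : E S := ⟨AdditiveInvSemigroup.vsup (p : S) q, hidem⟩ with hv
  have h1 : p ≤ v := (ba_le p v).mpr (AdditiveInvSemigroup.cle_vsup_left _ _ ho)
  have h2 : q ≤ v := (ba_le q v).mpr (AdditiveInvSemigroup.cle_vsup_right _ _ ho)
  have h3 : v ≤ p ⊔ q := by
    rw [ba_le]
    exact AdditiveInvSemigroup.vsup_cle _ _ _ ho
      ((ba_le p (p ⊔ q)).mp le_sup_left) ((ba_le q (p ⊔ q)).mp le_sup_right)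
  have : p ⊔ q = v := le_antisymm (sup_le h1 h2) h3
  rw [this]

lemma E_le_iff' {p q : E S} : p ≤ q ↔ cle (p : S) q := ba_le p q

lemma conj_mul (ψ : S) {p q : S} (hp : p * p = p) (hq : q * q = q) :
    (ψ⁻¹ * p * ψ) * (ψ⁻¹ * q * ψ) = ψ⁻¹ * (p * q) * ψ := by
  calc (ψ⁻¹ * p * ψ) * (ψ⁻¹ * q * ψ)
      = ψ⁻¹ * (p * ((ψ * ψ⁻¹) * (q * ψ))) := by simp only [mul_assoc]
    _ = ψ⁻¹ * ((ψ * ψ⁻¹) * (p * (q * ψ))) := by rw [swap_mid hp (mul_inv_idem ψ)]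
    _ = (ψ⁻¹ * ψ * ψ⁻¹) * (p * (q * ψ)) := by simp only [mul_assoc]
    _ = ψ⁻¹ * (p * (q * ψ)) := by rw [imi]
    _ = ψ⁻¹ * (p * q) * ψ := by simp only [mul_assoc]

end EAux


section CharAux
variable {S : Type u} [BooleanInverseMonoid S]

lemma char_mono (x : Character S) {p q : E S} (h : p ≤ q) (hp : x.toFun p = true) :
    x.toFun q = true := by
  have h2 : x.toFun p = (x.toFun p && x.toFun q) := by
    rw [← x.map_inf' p q, inf_eq_left.mpr h]
  rw [hp] at h2
  simpa using h2.symm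

lemma char_compl (x : Character S) (p : E S) : x.toFun pᶜ = !x.toFun p := by
  have hinf : (x.toFun p && x.toFun pᶜ) = false := by
    rw [← x.map_inf' p pᶜ, inf_compl_eq_bot, x.map_bot']
  have hsup : (x.toFun p || x.toFun pᶜ) = true := by
    rw [← x.map_sup' p pᶜ, sup_compl_eq_top, x.map_top']
  cases h : x.toFun p
  · rw [h] at hsup; simpa using hsup
  · rw [h] at hinf; simpa using hinf

lemma exists_char {q : E S} (hq : q ≠ ⊥) : ∃ x : Character S, x.toFun q = true := by
  classical
  have hmul : ∀ p r : E S, toBoolRing (p ⊓ r) = toBoolRing p * toBoolRing r := by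
    intro p r
    apply (ofBoolRing (α := E S)).injective
    rw [ofBoolRing_mul, ofBoolRing_toBoolRing, ofBoolRing_toBoolRing, ofBoolRing_toBoolRing]
  have hadd : ∀ p r : E S, toBoolRing (symmDiff p r) = toBoolRing p + toBoolRing r := by
    intro p r
    apply (ofBoolRing (α := E S)).injective
    rw [ofBoolRing_add, ofBoolRing_toBoolRing, ofBoolRing_toBoolRing, ofBoolRing_toBoolRing]
  have hone : toBoolRing (⊤ : E S) = 1 := by
    apply (ofBoolRing (α := E S)).injective
    rw [ofBoolRing_one, ofBoolRing_toBoolRing]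
  have hzero : toBoolRing (⊥ : E S) = 0 := by
    apply (ofBoolRing (α := E S)).injective
    rw [ofBoolRing_zero, ofBoolRing_toBoolRing]
  set tq := toBoolRing q with htq
  set y := toBoolRing qᶜ with hy
  have hqy : tq * y = 0 := by
    rw [← hmul, inf_compl_eq_bot, hzero]
  have hq1 : tq + y = 1 := by
    rw [← hadd]
    have : symmDiff q qᶜ = ⊤ := by
      rw [(disjoint_compl_right).symmDiff_eq_sup, sup_compl_eq_top]
    rw [this, hone]
  have htqne : tq ≠ 0 := by
    intro h
    apply hq
    have := congrArg (ofBoolRing (α := E S)) h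
    rwa [ofBoolRing_toBoolRing, ofBoolRing_zero] at this
  have hIne : Ideal.span {y} ≠ (⊤ : Ideal (AsBoolRing (E S))) := by
    intro h
    have h1 : (1 : AsBoolRing (E S)) ∈ Ideal.span {y} := h ▸ Submodule.mem_top
    obtain ⟨a, ha⟩ := Ideal.mem_span_singleton'.mp h1
    apply htqne
    calc tq = tq * 1 := (mul_one tq).symm
      _ = tq * (a * y) := by rw [ha]
      _ = a * (tq * y) := by ring
      _ = 0 := by rw [hqy, mul_zero]
  obtain ⟨M, hM, hIM⟩ := Ideal.exists_le_maximal _ hIne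
  have hyM : y ∈ M := hIM (Ideal.subset_span rfl)
  have h1M : (1 : AsBoolRing (E S)) ∉ M := (Ideal.ne_top_iff_one M).mp hM.ne_top
  have htqM : tq ∉ M := by
    intro h
    exact h1M (hq1 ▸ M.add_mem h hyM)
  have hP := hM.isPrime
  have memiff : ∀ p r : E S, (toBoolRing (p ⊓ r) ∉ M) ↔ (toBoolRing p ∉ M ∧ toBoolRing r ∉ M) := by
    intro p r
    rw [hmul, hP.mul_mem_iff_mem_or_mem]
    tauto
  have memmono : ∀ p r : E S, p ≤ r → toBoolRing p ∉ M → toBoolRing r ∉ M := by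
    intro p r h hp hr
    apply hp
    have : p ⊓ r = p := inf_eq_left.mpr h
    rw [← this, hmul]
    exact M.mul_mem_left _ hr
  refine ⟨⟨fun p => decide (toBoolRing p ∉ M), ?_, ?_, ?_, ?_⟩, ?_⟩
  · intro p r
    show decide (toBoolRing (p ⊓ r) ∉ M) = (decide (toBoolRing p ∉ M) && decide (toBoolRing r ∉ M))
    by_cases h1 : toBoolRing p ∈ M <;> by_cases h2 : toBoolRing r ∈ M <;>
        simp [h1, h2, memiff p r] <;>
      first
        | exact M.mul_mem_left _ h2
        | exact M.mul_mem_right _ h1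
        | (rw [← hmul]; exact (memiff p r).mpr ⟨h1, h2⟩)
        | exact decide_eq_false (fun h => h (M.mul_mem_left _ h2))
        | exact decide_eq_false (fun h => h (M.mul_mem_right _ h1))
        | exact decide_eq_true (by rw [← hmul]; exact (memiff p r).mpr ⟨h1, h2⟩)
  · intro p r
    have key : (toBoolRing (p ⊔ r) ∉ M) ↔ (toBoolRing p ∉ M ∨ toBoolRing r ∉ M) := by
      constructor
      · intro h
        by_contra hc
        push_neg at hc
        apply h
        have hsd : toBoolRing (r \ p) ∈ M := by
          have hle : r \ p ≤ r := sdiff_le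
          have : (r \ p) ⊓ r = r \ p := inf_eq_left.mpr hle
          rw [← this, hmul]
          exact M.mul_mem_left _ hc.2
        have hsum : toBoolRing (p ⊔ r) = toBoolRing p + toBoolRing (r \ p) := by
          rw [← hadd, (disjoint_sdiff_self_right).symmDiff_eq_sup, sup_sdiff_self_right]
        rw [hsum]
        exact M.add_mem hc.1 hsd
      · intro h
        rcases h with h | h
        · exact memmono p _ le_sup_left h
        · exact memmono r _ le_sup_right h
    show decide (toBoolRing (p ⊔ r) ∉ M) = (decide (toBoolRing p ∉ M) || decide (toBoolRing r ∉ M))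
    by_cases h1 : toBoolRing p ∈ M <;> by_cases h2 : toBoolRing r ∈ M <;>
      simp [h1, h2, key]
  · simp only [hone]
    simpa using h1M
  · simp only [hzero]
    simp [M.zero_mem]
  · simpa using htqM

end CharAux


section GpdAux
variable {S : Type u} [BooleanInverseMonoid S]

/-- The domain idempotent of `φ` as an element of `E S`. -/
def domE (φ : S) : E S := ⟨φ⁻¹ * φ, inv_mul_idem φ⟩

lemma mem_EhatAt_iff {x : Character S} {φ : S} :
    x ∈ EhatAt φ ↔ x.toFun (domE φ) = true := Iff.rfl

lemma mk_eq_mk_iff {χ χ' : S} {x x' : Character S} (hx : x ∈ EhatAt χ) (hx' : x' ∈ EhatAt χ') :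
    mk χ x hx = mk χ' x' hx' ↔
      (x = x' ∧ ∃ p : E S, x.toFun p = true ∧ χ * p.1 = χ' * p.1) := by
  unfold mk
  show Quotient.mk (gpdSetoid S) _ = Quotient.mk (gpdSetoid S) _ ↔ _
  rw [Quotient.eq]
  exact Iff.rfl

lemma gpd_surj (g : Gpd S) : ∃ (χ : S) (x : Character S) (hx : x ∈ EhatAt χ), g = mk χ x hx := by
  induction g using Quotient.ind with
  | _ a => exact ⟨a.1.1, a.1.2, a.2, rfl⟩

lemma mk_mem_U {χ : S} {x : Character S} (hx : x ∈ EhatAt χ) : mk χ x hx ∈ U χ :=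
  ⟨x, hx, rfl⟩

lemma EhatAt_mono {α χ : S} (h : cle α χ) {x : Character S} (hx : x ∈ EhatAt α) :
    x ∈ EhatAt χ := by
  rw [mem_EhatAt_iff] at hx ⊢
  exact char_mono x ((ba_le _ _).mpr (cle_dom h)) hx

lemma mk_eq_of_cle {α χ : S} (h : cle α χ) {x : Character S}
    (hx' : x ∈ EhatAt χ) (hx : x ∈ EhatAt α) : mk χ x hx' = mk α x hx := by
  rw [mk_eq_mk_iff]
  refine ⟨rfl, domE α, hx, ?_⟩
  show χ * (α⁻¹ * α) = α * (α⁻¹ * α)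
  rw [← cle_alt h, mul_dom]

lemma mk_mem_U_iff {χ ψ : S} {x : Character S} (hx : x ∈ EhatAt χ) :
    mk χ x hx ∈ U ψ ↔ ∃ hψ : x ∈ EhatAt ψ, mk χ x hx = mk ψ x hψ := by
  constructor
  · rintro ⟨x', hx', heq⟩
    have hxx' : x = x' := ((mk_eq_mk_iff hx hx').mp heq).1
    subst hxx'
    exact ⟨hx', heq⟩
  · rintro ⟨hψ, heq⟩
    exact ⟨x, hψ, heq⟩

lemma U_mono {α χ : S} (h : cle α χ) : U α ⊆ U χ := by
  rintro g ⟨x, hx, rfl⟩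
  have hx' : x ∈ EhatAt χ := EhatAt_mono h hx
  exact ⟨x, hx', (mk_eq_of_cle h hx' hx).symm⟩

lemma U_zero : U (0 : S) = (∅ : Set (Gpd S)) := by
  ext g
  simp only [Set.mem_empty_iff_false, iff_false]
  rintro ⟨x, hx, rfl⟩
  rw [mem_EhatAt_iff] at hx
  have : domE (0 : S) = (⊥ : E S) := by
    apply Subtype.ext
    show (0 : S)⁻¹ * 0 = (⊥ : E S).1
    rw [zero_inv', zmul, bot_coe]
  rw [this, x.map_bot'] at hx
  exact Bool.false_ne_true hx

/-- The conjugated idempotent as an element of `E S`. -/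
def conjE (χ : S) (q : E S) : E S := ⟨χ⁻¹ * q.1 * χ, conj_idem χ q.2⟩

lemma alphaFun_eq (χ : S) (x : Character S) (q : E S) :
    alphaFun χ x q = x.toFun (conjE χ q) := rfl

lemma inf_sandwich (a p : E S) : ((a ⊓ p : E S) : S) = p.1 * a.1 * p.1 := by
  rw [inf_coe]
  have : p.1 * a.1 * p.1 = a.1 * p.1 := by
    calc p.1 * a.1 * p.1 = p.1 * (a.1 * p.1) := mul_assoc _ _ _
      _ = p.1 * (p.1 * a.1) := by rw [idem_comm a.2 p.2]
      _ = p.1 * a.1 := idem_absorb p.2 _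
      _ = a.1 * p.1 := idem_comm p.2 a.2
  exact this.symm

lemma alpha_eq_of_mk_eq {χ χ' : S} {x x' : Character S} {hx : x ∈ EhatAt χ}
    {hx' : x' ∈ EhatAt χ'} (heq : mk χ x hx = mk χ' x' hx') :
    alphaFun χ x = alphaFun χ' x' := by
  obtain ⟨hxx', p, hp1, hp2⟩ := (mk_eq_mk_iff hx hx').mp heq
  subst hxx'
  funext q
  have hpinv : p.1 * χ⁻¹ = p.1 * χ'⁻¹ := by
    have := congrArg (·⁻¹) hp2
    simpa [mul_inv_rev', idem_inv p.2] using this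
  have key : ((conjE χ q ⊓ p : E S) : S) = ((conjE χ' q ⊓ p : E S) : S) := by
    rw [inf_sandwich, inf_sandwich]
    show p.1 * (χ⁻¹ * q.1 * χ) * p.1 = p.1 * (χ'⁻¹ * q.1 * χ') * p.1
    calc p.1 * (χ⁻¹ * q.1 * χ) * p.1
        = (p.1 * χ⁻¹) * (q.1 * (χ * p.1)) := by simp only [mul_assoc]
      _ = (p.1 * χ'⁻¹) * (q.1 * (χ' * p.1)) := by rw [hpinv, hp2]
      _ = p.1 * (χ'⁻¹ * q.1 * χ') * p.1 := by simp only [mul_assoc]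
  have keyE : conjE χ q ⊓ p = conjE χ' q ⊓ p := Subtype.ext key
  calc alphaFun χ x q = x.toFun (conjE χ q) := rfl
    _ = (x.toFun (conjE χ q) && x.toFun p) := by rw [hp1, Bool.and_true]
    _ = x.toFun (conjE χ q ⊓ p) := (x.map_inf' _ _).symm
    _ = x.toFun (conjE χ' q ⊓ p) := by rw [keyE]
    _ = (x.toFun (conjE χ' q) && x.toFun p) := x.map_inf' _ _
    _ = x.toFun (conjE χ' q) := by rw [hp1, Bool.and_true]
    _ = alphaFun χ' x q := rfl

/-- The idempotent `ψ p ψ⁻¹` as an element of `E S`. -/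
def conjE' (ψ : S) (p : E S) : E S :=
  ⟨ψ * p.1 * ψ⁻¹, by
    have := conj_idem ψ⁻¹ p.2
    rwa [inv_inv'] at this⟩

lemma conj_conj (ψ : S) (p : E S) : conjE ψ (conjE' ψ p) = p ⊓ domE ψ := by
  apply Subtype.ext
  rw [inf_coe]
  show ψ⁻¹ * (ψ * p.1 * ψ⁻¹) * ψ = p.1 * (ψ⁻¹ * ψ)
  calc ψ⁻¹ * (ψ * p.1 * ψ⁻¹) * ψ
      = (ψ⁻¹ * ψ) * (p.1 * (ψ⁻¹ * ψ)) := by simp only [mul_assoc]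
    _ = p.1 * ((ψ⁻¹ * ψ) * (ψ⁻¹ * ψ)) := by rw [swap_mid (inv_mul_idem ψ) p.2]
    _ = p.1 * (ψ⁻¹ * ψ) := by rw [inv_mul_idem]

lemma alpha_inj {ψ : S} {x x' : Character S} (hx : x ∈ EhatAt ψ) (hx' : x' ∈ EhatAt ψ)
    (h : alphaFun ψ x = alphaFun ψ x') : x = x' := by
  apply Character.ext
  intro p
  rw [mem_EhatAt_iff] at hx hx'
  calc x.toFun p = (x.toFun p && x.toFun (domE ψ)) := by rw [hx, Bool.and_true]
    _ = x.toFun (p ⊓ domE ψ) := (x.map_inf' _ _).symm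
    _ = x.toFun (conjE ψ (conjE' ψ p)) := by rw [conj_conj]
    _ = alphaFun ψ x (conjE' ψ p) := rfl
    _ = alphaFun ψ x' (conjE' ψ p) := by rw [h]
    _ = x'.toFun (conjE ψ (conjE' ψ p)) := rfl
    _ = x'.toFun (p ⊓ domE ψ) := by rw [conj_conj]
    _ = (x'.toFun p && x'.toFun (domE ψ)) := x'.map_inf' _ _
    _ = x'.toFun p := by rw [hx', Bool.and_true]

lemma mk_eq_meet {φ ψ : S} {x : Character S} (hφ : x ∈ EhatAt φ) (hψ : x ∈ EhatAt ψ)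
    (heq : mk φ x hφ = mk ψ x hψ) :
    ∃ hm : x ∈ EhatAt (BooleanInverseMonoid.vinf φ ψ),
      mk φ x hφ = mk (BooleanInverseMonoid.vinf φ ψ) x hm := by
  obtain ⟨-, p, hp1, hp2⟩ := (mk_eq_mk_iff hφ hψ).mp heq
  set α := φ * p.1 with hα
  have hcleφ : cle α φ := cle_mul_idem' φ p.2
  have hcleψ : cle α ψ := by
    rw [hp2]
    exact cle_mul_idem' ψ p.2
  have hclem : cle α (BooleanInverseMonoid.vinf φ ψ) :=
    BooleanInverseMonoid.cle_vinf φ ψ α hcleφ hcleψ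
  have hdomα : domE α = domE φ ⊓ p := by
    apply Subtype.ext
    rw [inf_coe]
    show (φ * p.1)⁻¹ * (φ * p.1) = (φ⁻¹ * φ) * p.1
    rw [mul_inv_rev', idem_inv p.2]
    calc p.1 * φ⁻¹ * (φ * p.1) = p.1 * ((φ⁻¹ * φ) * p.1) := by simp only [mul_assoc]
      _ = (φ⁻¹ * φ) * (p.1 * p.1) := by rw [swap_mid p.2 (inv_mul_idem φ)]
      _ = (φ⁻¹ * φ) * p.1 := by rw [p.2]
  have hxα : x ∈ EhatAt α := by
    rw [mem_EhatAt_iff, hdomα, x.map_inf']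
    rw [mem_EhatAt_iff] at hφ
    rw [hφ, hp1]
    rfl
  have hxm : x ∈ EhatAt (BooleanInverseMonoid.vinf φ ψ) := EhatAt_mono hclem hxα
  refine ⟨hxm, ?_⟩
  rw [mk_eq_of_cle hcleφ hφ hxα, mk_eq_of_cle hclem hxm hxα]

lemma U_inter (φ ψ : S) : U φ ∩ U ψ = U (BooleanInverseMonoid.vinf φ ψ) := by
  apply Set.Subset.antisymm
  · rintro g ⟨⟨x, hx, rfl⟩, hUψ⟩
    obtain ⟨hψ, heq⟩ := (mk_mem_U_iff hx).mp hUψ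
    obtain ⟨hm, heq'⟩ := mk_eq_meet hx hψ heq
    exact ⟨x, hm, heq'⟩
  · intro g hg
    constructor
    · exact U_mono (BooleanInverseMonoid.vinf_cle_left φ ψ) hg
    · exact U_mono (BooleanInverseMonoid.vinf_cle_right φ ψ) hg

end GpdAux


section TopAux
variable {S : Type u} [BooleanInverseMonoid S]

lemma U_open (φ : S) : IsOpen (U (S := S) φ) :=
  TopologicalSpace.isOpen_generateFrom_of_mem ⟨φ, rfl⟩

lemma char_continuous_eval (p : E S) : Continuous (fun x : Character S => x.toFun p) := by
  have h1 : Continuous (fun x : Character S => x.toFun) := continuous_induced_dom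
  exact (continuous_apply p).comp h1

lemma isOpen_char_eval (p : E S) : IsOpen {x : Character S | x.toFun p = true} := by
  have := (char_continuous_eval (S := S) p).isOpen_preimage {true} (isOpen_discrete _)
  simpa [Set.preimage] using this

lemma char_compactSpace : CompactSpace (Character S) := by
  set i : Character S → (E S → Bool) := fun x => x.toFun with hi
  have hind : Topology.IsInducing i := ⟨rfl⟩
  have hrange : Set.range i =
      {f : E S → Bool | (∀ p q, f (p ⊓ q) = (f p && f q)) ∧
        (∀ p q, f (p ⊔ q) = (f p || f q)) ∧ f ⊤ = true ∧ f ⊥ = false} := by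
    ext f
    constructor
    · rintro ⟨x, rfl⟩
      exact ⟨x.map_inf', x.map_sup', x.map_top', x.map_bot'⟩
    · rintro ⟨h1, h2, h3, h4⟩
      exact ⟨⟨f, h1, h2, h3, h4⟩, rfl⟩
  have hand : ∀ (a b : E S), Continuous (fun f : E S → Bool => (f a && f b)) := by
    intro a b
    have : (fun f : E S → Bool => (f a && f b)) =
        (fun u : Bool × Bool => (u.1 && u.2)) ∘ (fun f => (f a, f b)) := rfl
    rw [this]
    exact (continuous_of_discreteTopology).comp ((continuous_apply a).prodMk (continuous_apply b))
  have hor : ∀ (a b : E S), Continuous (fun f : E S → Bool => (f a || f b)) := by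
    intro a b
    have : (fun f : E S → Bool => (f a || f b)) =
        (fun u : Bool × Bool => (u.1 || u.2)) ∘ (fun f => (f a, f b)) := rfl
    rw [this]
    exact (continuous_of_discreteTopology).comp ((continuous_apply a).prodMk (continuous_apply b))
  have hcl : IsClosed (Set.range i) := by
    rw [hrange]
    have e1 : {f : E S → Bool | (∀ p q, f (p ⊓ q) = (f p && f q)) ∧
        (∀ p q, f (p ⊔ q) = (f p || f q)) ∧ f ⊤ = true ∧ f ⊥ = false} =
        (⋂ (p : E S) (q : E S), {f : E S → Bool | f (p ⊓ q) = (f p && f q)}) ∩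
        ((⋂ (p : E S) (q : E S), {f : E S → Bool | f (p ⊔ q) = (f p || f q)}) ∩
         ({f : E S → Bool | f ⊤ = true} ∩ {f : E S → Bool | f ⊥ = false})) := by
      ext f
      simp only [Set.mem_setOf_eq, Set.mem_inter_iff, Set.mem_iInter]
    rw [e1]
    refine IsClosed.inter ?_ (IsClosed.inter ?_ (IsClosed.inter ?_ ?_))
    · exact isClosed_iInter fun p => isClosed_iInter fun q =>
        isClosed_eq (continuous_apply _) (hand p q)
    · exact isClosed_iInter fun p => isClosed_iInter fun q =>
        isClosed_eq (continuous_apply _) (hor p q)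
    · exact isClosed_eq (continuous_apply _) continuous_const
    · exact isClosed_eq (continuous_apply _) continuous_const
  have h2 : IsCompact (Set.univ : Set (Character S)) := by
    rw [hind.isCompact_iff, Set.image_univ]
    exact hcl.isCompact
  exact isCompact_univ_iff.mp h2

lemma EhatAt_closed (ψ : S) : IsClosed {x : Character S | x ∈ EhatAt ψ} := by
  have : {x : Character S | x ∈ EhatAt ψ} = {x : Character S | x.toFun (domE ψ) = true} := rfl
  rw [this]
  exact isClosed_eq (char_continuous_eval _) continuous_const

/-- The map `x ↦ [ψ, x]` from `Ê(S)_ψ` to `𝒢(S)`. -/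
def mkMap (ψ : S) : {x : Character S // x ∈ EhatAt ψ} → Gpd S := fun z => mk ψ z.1 z.2

lemma mkMap_continuous (ψ : S) : Continuous (mkMap (S := S) ψ) := by
  rw [continuous_generateFrom_iff]
  rintro V ⟨χ, rfl⟩
  have hpre : mkMap (S := S) ψ ⁻¹' U χ =
      ⋃ (p : E S) (_ : ψ * p.1 = χ * p.1),
        {z : {x : Character S // x ∈ EhatAt ψ} |
          z.1.toFun (domE χ) = true ∧ z.1.toFun p = true} := by
    ext z
    simp only [Set.mem_preimage, Set.mem_iUnion, Set.mem_setOf_eq]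
    constructor
    · intro hz
      obtain ⟨hχ, heq⟩ := (mk_mem_U_iff z.2).mp hz
      obtain ⟨-, p, hp1, hp2⟩ := (mk_eq_mk_iff z.2 hχ).mp heq
      exact ⟨p, hp2, hχ, hp1⟩
    · rintro ⟨p, hp2, hχ, hp1⟩
      exact (mk_mem_U_iff z.2).mpr ⟨hχ, (mk_eq_mk_iff z.2 hχ).mpr ⟨rfl, p, hp1, hp2⟩⟩
  rw [hpre]
  refine isOpen_iUnion fun p => isOpen_iUnion fun h => ?_
  have : {z : {x : Character S // x ∈ EhatAt ψ} |
      z.1.toFun (domE χ) = true ∧ z.1.toFun p = true} =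
      Subtype.val ⁻¹' ({x : Character S | x.toFun (domE χ) = true} ∩
        {x : Character S | x.toFun p = true}) := rfl
  rw [this]
  exact ((isOpen_char_eval _).inter (isOpen_char_eval _)).preimage continuous_subtype_val

lemma U_compact (ψ : S) : IsCompact (U (S := S) ψ) := by
  haveI := char_compactSpace (S := S)
  have hK : IsCompact {x : Character S | x ∈ EhatAt ψ} := (EhatAt_closed ψ).isCompact
  haveI : CompactSpace {x : Character S // x ∈ EhatAt ψ} := isCompact_iff_compactSpace.mp hK
  have hr : U (S := S) ψ = Set.range (mkMap (S := S) ψ) := by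
    ext g
    constructor
    · rintro ⟨x, hx, rfl⟩
      exact ⟨⟨x, hx⟩, rfl⟩
    · rintro ⟨⟨x, hx⟩, rfl⟩
      exact ⟨x, hx, rfl⟩
  rw [hr]
  exact isCompact_range (mkMap_continuous ψ)

end TopAux


section ConjAux
variable {S : Type u} [BooleanInverseMonoid S]

/-- The range idempotent of `φ` as an element of `E S`. -/
def ranE (φ : S) : E S := ⟨φ * φ⁻¹, mul_inv_idem φ⟩

lemma domE_mul_idem (φ : S) (p : E S) : domE (φ * p.1) = domE φ ⊓ p := by
  apply Subtype.ext
  rw [inf_coe]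
  show (φ * p.1)⁻¹ * (φ * p.1) = (φ⁻¹ * φ) * p.1
  rw [mul_inv_rev', idem_inv p.2]
  calc p.1 * φ⁻¹ * (φ * p.1) = p.1 * ((φ⁻¹ * φ) * p.1) := by simp only [mul_assoc]
    _ = (φ⁻¹ * φ) * (p.1 * p.1) := by rw [swap_mid p.2 (inv_mul_idem φ)]
    _ = (φ⁻¹ * φ) * p.1 := by rw [p.2]

lemma domE_mul (φ ψ : S) : domE (φ * ψ) = conjE ψ (domE φ) := by
  apply Subtype.ext
  show (φ * ψ)⁻¹ * (φ * ψ) = ψ⁻¹ * (φ⁻¹ * φ) * ψ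
  rw [mul_inv_rev']
  simp only [mul_assoc]

lemma conjE_inf (ψ : S) (p q : E S) : conjE ψ (p ⊓ q) = conjE ψ p ⊓ conjE ψ q := by
  apply Subtype.ext
  rw [inf_coe]
  show ψ⁻¹ * ((p ⊓ q : E S) : S) * ψ = (ψ⁻¹ * p.1 * ψ) * (ψ⁻¹ * q.1 * ψ)
  rw [inf_coe, conj_mul ψ p.2 q.2]

lemma conjE_mono (ψ : S) {p q : E S} (h : p ≤ q) : conjE ψ p ≤ conjE ψ q := by
  have : conjE ψ p ⊓ conjE ψ q = conjE ψ p := by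
    rw [← conjE_inf, inf_eq_left.mpr h]
  exact inf_eq_left.mp this

lemma conjE_bot (ψ : S) : conjE ψ (⊥ : E S) = ⊥ := by
  apply Subtype.ext
  show ψ⁻¹ * ((⊥ : E S) : S) * ψ = ((⊥ : E S) : S)
  rw [bot_coe, mulz, zmul]

lemma conjE_top (ψ : S) : conjE ψ (⊤ : E S) = domE ψ := by
  apply Subtype.ext
  show ψ⁻¹ * ((⊤ : E S) : S) * ψ = ψ⁻¹ * ψ
  rw [mul_assoc, top_mul']

lemma conjE_le_domE (ψ : S) (q : E S) : conjE ψ q ≤ domE ψ := by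
  have h := conjE_mono ψ (le_top : q ≤ ⊤)
  rwa [conjE_top] at h

lemma conjE_absorb (ψ : S) (q : E S) : conjE ψ (q ⊓ ranE ψ) = conjE ψ q := by
  apply Subtype.ext
  show ψ⁻¹ * ((q ⊓ ranE ψ : E S) : S) * ψ = ψ⁻¹ * q.1 * ψ
  rw [inf_coe]
  show ψ⁻¹ * (q.1 * (ψ * ψ⁻¹)) * ψ = ψ⁻¹ * q.1 * ψ
  calc ψ⁻¹ * (q.1 * (ψ * ψ⁻¹)) * ψ = ψ⁻¹ * (q.1 * (ψ * (ψ⁻¹ * ψ))) := by simp only [mul_assoc]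
    _ = ψ⁻¹ * (q.1 * ψ) := by rw [mul_dom ψ]
    _ = ψ⁻¹ * q.1 * ψ := (mul_assoc _ _ _).symm

lemma conjE_sup_char (ψ : S) (y : Character S) (p q : E S) :
    y.toFun (conjE ψ (p ⊔ q)) = (y.toFun (conjE ψ p) || y.toFun (conjE ψ q)) := by
  set r := q \ p with hr
  have hdisj : Disjoint p r := disjoint_sdiff_self_right
  have hsupE : p ⊔ r = p ⊔ q := sup_sdiff_self_right p q
  have hpr0 : p.1 * r.1 = 0 := disj_mul_zero hdisj
  have hconjdisj : conjE ψ p ⊓ conjE ψ r = ⊥ := by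
    rw [← conjE_inf, disjoint_iff.mp hdisj, conjE_bot]
  have horthconj : orth (ψ⁻¹ * p.1 * ψ) (ψ⁻¹ * r.1 * ψ) := by
    apply orth_idem_of_mul_zero (conj_idem ψ p.2) (conj_idem ψ r.2)
    rw [conj_mul ψ p.2 r.2, hpr0, mulz, zmul]
  have horthhalf : orth (ψ⁻¹ * p.1) (ψ⁻¹ * r.1) := by
    constructor
    · rw [mul_inv_rev', idem_inv r.2, inv_inv']
      calc ψ⁻¹ * p.1 * (r.1 * ψ) = ψ⁻¹ * ((p.1 * r.1) * ψ) := by simp only [mul_assoc]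
        _ = 0 := by rw [hpr0, zmul, mulz]
    · rw [mul_inv_rev', idem_inv p.2, inv_inv']
      calc p.1 * ψ * (ψ⁻¹ * r.1) = p.1 * ((ψ * ψ⁻¹) * r.1) := by simp only [mul_assoc]
        _ = (ψ * ψ⁻¹) * (p.1 * r.1) := by rw [swap_mid p.2 (mul_inv_idem ψ), ← mul_assoc]
        _ = 0 := by rw [hpr0, mulz]
  have hvsup : ψ⁻¹ * (AdditiveInvSemigroup.vsup p.1 r.1) * ψ
      = AdditiveInvSemigroup.vsup (ψ⁻¹ * p.1 * ψ) (ψ⁻¹ * r.1 * ψ) := by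
    rw [AdditiveInvSemigroup.mul_vsup _ _ _ (orth_of_disj hdisj)]
    rw [AdditiveInvSemigroup.vsup_mul _ _ _ horthhalf]
  have hkey : conjE ψ (p ⊔ q) = conjE ψ p ⊔ conjE ψ r := by
    apply Subtype.ext
    rw [sup_coe_of_disj (disjoint_iff.mpr hconjdisj)]
    show ψ⁻¹ * ((p ⊔ q : E S) : S) * ψ
      = AdditiveInvSemigroup.vsup ((conjE ψ p : E S) : S) ((conjE ψ r : E S) : S)
    rw [← hsupE, sup_coe_of_disj hdisj, hvsup]
    rfl
  rw [hkey, y.map_sup']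
  -- now compare `y (conjE ψ r)` with `y (conjE ψ q)` behind the disjunction
  have hrq : conjE ψ r ≤ conjE ψ q := conjE_mono ψ sdiff_le
  have hqpr : conjE ψ q ≤ conjE ψ p ⊔ conjE ψ r := by
    rw [← hkey]
    exact conjE_mono ψ le_sup_right
  cases hp : y.toFun (conjE ψ p)
  · simp only [Bool.false_or]
    cases hq : y.toFun (conjE ψ q)
    · cases hr2 : y.toFun (conjE ψ r)
      · rfl
      · have := char_mono y hrq hr2
        rw [hq] at this
        exact this.symm
    · have := char_mono y hqpr hq
      rw [y.map_sup', hp, Bool.false_or] at this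
      exact this
  · simp

/-- Transport of a character along `α_ψ`. -/
def alphaChar (ψ : S) (y : Character S) (hy : y ∈ EhatAt ψ) : Character S where
  toFun := alphaFun ψ y
  map_inf' := fun p q => by
    rw [alphaFun_eq, alphaFun_eq, alphaFun_eq, conjE_inf, y.map_inf']
  map_sup' := fun p q => conjE_sup_char ψ y p q
  map_top' := by
    rw [alphaFun_eq, conjE_top]
    exact hy
  map_bot' := by
    rw [alphaFun_eq, conjE_bot]
    exact y.map_bot'

lemma ranE_eq_domE_inv (φ : S) : ranE φ = domE φ⁻¹ := by
  apply Subtype.ext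
  show φ * φ⁻¹ = φ⁻¹⁻¹ * φ⁻¹
  rw [inv_inv']

lemma conjE_ran_of_cle {m ψ : S} (h : cle m ψ) : conjE ψ (ranE m) = domE m := by
  have h1 : conjE ψ (ranE m) = domE m ⊓ domE ψ := by
    apply Subtype.ext
    rw [inf_sandwich]
    show ψ⁻¹ * (m * m⁻¹) * ψ = (domE ψ : S) * (domE m : S) * (domE ψ : S)
    have hm : m = ψ * (m⁻¹ * m) := cle_alt h
    have hminv : m⁻¹ = (m⁻¹ * m) * ψ⁻¹ := inv_dom_eq h
    calc ψ⁻¹ * (m * m⁻¹) * ψ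
        = ψ⁻¹ * ((ψ * (m⁻¹ * m)) * ((m⁻¹ * m) * ψ⁻¹)) * ψ := by rw [← hm, ← hminv]
      _ = (ψ⁻¹ * ψ) * (((m⁻¹ * m) * (m⁻¹ * m)) * (ψ⁻¹ * ψ)) := by simp only [mul_assoc]
      _ = (ψ⁻¹ * ψ) * ((m⁻¹ * m) * (ψ⁻¹ * ψ)) := by rw [inv_mul_idem]
      _ = (domE ψ : S) * (domE m : S) * (domE ψ : S) := by
          show (ψ⁻¹ * ψ) * ((m⁻¹ * m) * (ψ⁻¹ * ψ)) = (ψ⁻¹ * ψ) * (m⁻¹ * m) * (ψ⁻¹ * ψ)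
          simp only [mul_assoc]
  rw [h1, inf_eq_left.mpr ((ba_le _ _).mpr (cle_dom h))]

end ConjAux


section BisAux
variable {S : Type u} [BooleanInverseMonoid S]

lemma conjE_inv_domE (φ : S) : conjE φ⁻¹ (domE φ) = ranE φ := by
  apply Subtype.ext
  show φ⁻¹⁻¹ * (φ⁻¹ * φ) * φ⁻¹ = φ * φ⁻¹
  rw [inv_inv', mul_dom]

lemma conj_conj' (φ : S) (q : E S) : conjE φ⁻¹ (conjE φ q) = q ⊓ ranE φ := by
  apply Subtype.ext
  rw [inf_sandwich]
  show φ⁻¹⁻¹ * (φ⁻¹ * q.1 * φ) * φ⁻¹ = (ranE φ : S) * q.1 * (ranE φ : S)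
  show φ⁻¹⁻¹ * (φ⁻¹ * q.1 * φ) * φ⁻¹ = (φ * φ⁻¹) * q.1 * (φ * φ⁻¹)
  rw [inv_inv']
  simp only [mul_assoc]

lemma ranE_mul_idem (φ : S) (p : E S) : ranE (φ * p.1) = conjE φ⁻¹ p := by
  apply Subtype.ext
  show (φ * p.1) * (φ * p.1)⁻¹ = φ⁻¹⁻¹ * p.1 * φ⁻¹
  rw [mul_inv_rev', idem_inv p.2, inv_inv']
  calc (φ * p.1) * (p.1 * φ⁻¹) = φ * ((p.1 * p.1) * φ⁻¹) := by simp only [mul_assoc]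
    _ = φ * (p.1 * φ⁻¹) := by rw [p.2]
    _ = φ * p.1 * φ⁻¹ := (mul_assoc _ _ _).symm

lemma U_isBisection (ψ : S) : IsCompactOpenBisection (U (S := S) ψ) := by
  refine ⟨U_compact ψ, U_open ψ, ?_⟩
  intro χ χ' x x' hx hx' hmem hmem'
  obtain ⟨hψ, heqψ⟩ := (mk_mem_U_iff hx).mp hmem
  obtain ⟨hψ', heqψ'⟩ := (mk_mem_U_iff hx').mp hmem'
  have c3 : x = x' → mk χ x hx = mk χ' x' hx' := by
    intro hxx'
    subst hxx'
    rw [heqψ, heqψ']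
  refine ⟨fun h => ((mk_eq_mk_iff hx hx').mp h).1, fun h => alpha_eq_of_mk_eq h, c3, ?_⟩
  intro halpha
  have h1 : alphaFun ψ x = alphaFun ψ x' := by
    calc alphaFun ψ x = alphaFun χ x := (alpha_eq_of_mk_eq heqψ).symm
      _ = alphaFun χ' x' := halpha
      _ = alphaFun ψ x' := alpha_eq_of_mk_eq heqψ'
  exact c3 (alpha_inj hψ hψ' h1)

lemma exists_U_subset {W : Set (Gpd S)} (hW : IsOpen W) :
    ∀ g ∈ W, ∃ φ : S, g ∈ U φ ∧ U φ ⊆ W := by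
  have hgen : TopologicalSpace.GenerateOpen {V : Set (Gpd S) | ∃ φ : S, V = U φ} W := hW
  clear hW
  induction hgen with
  | basic V hV =>
      obtain ⟨φ, rfl⟩ := hV
      exact fun g hg => ⟨φ, hg, subset_rfl⟩
  | univ =>
      intro g _
      obtain ⟨χ, x, hx, rfl⟩ := gpd_surj g
      exact ⟨χ, mk_mem_U hx, Set.subset_univ _⟩
  | inter V1 V2 h1 h2 ih1 ih2 =>
      intro g hg
      obtain ⟨φ1, hg1, hs1⟩ := ih1 g hg.1
      obtain ⟨φ2, hg2, hs2⟩ := ih2 g hg.2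
      refine ⟨BooleanInverseMonoid.vinf φ1 φ2, ?_, ?_⟩
      · rw [← U_inter]; exact ⟨hg1, hg2⟩
      · rw [← U_inter]
        exact fun y hy => ⟨hs1 hy.1, hs2 hy.2⟩
  | sUnion T hT ih =>
      intro g hg
      obtain ⟨V, hV, hgV⟩ := hg
      obtain ⟨φ, h1, h2⟩ := ih V hV g hgV
      exact ⟨φ, h1, h2.trans (Set.subset_sUnion_of_mem hV)⟩

lemma cle_of_U_subset {φ ψ : S} (h : U φ ⊆ U ψ) : cle φ ψ := by
  set m := BooleanInverseMonoid.vinf φ ψ with hm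
  have hmφ : cle m φ := BooleanInverseMonoid.vinf_cle_left φ ψ
  have hmψ : cle m ψ := BooleanInverseMonoid.vinf_cle_right φ ψ
  have hdle : domE φ ≤ domE m := by
    by_contra hc
    have hne : domE φ \ domE m ≠ ⊥ := by
      intro hb
      exact hc (sdiff_eq_bot_iff.mp hb)
    obtain ⟨x, hx⟩ := exists_char hne
    have hxφ : x ∈ EhatAt φ := char_mono x sdiff_le hx
    have hmemψ := h (mk_mem_U hxφ)
    obtain ⟨hxψ, heq⟩ := (mk_mem_U_iff hxφ).mp hmemψ
    obtain ⟨hxm, -⟩ := mk_eq_meet hxφ hxψ heq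
    have hcompl : x.toFun (domE m)ᶜ = true := by
      refine char_mono x ?_ hx
      rw [sdiff_eq]
      exact inf_le_right
    have hxm' : x.toFun (domE m) = true := hxm
    rw [char_compl] at hcompl
    simp [hxm'] at hcompl
  have hdeq : domE m = domE φ := le_antisymm ((ba_le _ _).mpr (cle_dom hmφ)) hdle
  have hφm : φ = m := by
    have h1 : m = φ * (m⁻¹ * m) := cle_alt hmφ
    have h2 : (m⁻¹ * m : S) = φ⁻¹ * φ := congrArg Subtype.val hdeq
    rw [h1, h2, mul_dom]
  rw [hφm]
  exact hmψ

lemma merge_lemma {W : Set (Gpd S)} (hW : IsCompactOpenBisection W) (φ ψ : S)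
    (hφW : U φ ⊆ W) (hψW : U ψ ⊆ W) :
    ∃ θ : S, U (S := S) θ = U φ ∪ U ψ := by
  classical
  set m := BooleanInverseMonoid.vinf φ ψ with hmdef
  have hmφ : cle m φ := BooleanInverseMonoid.vinf_cle_left φ ψ
  have hmψ : cle m ψ := BooleanInverseMonoid.vinf_cle_right φ ψ
  -- Step 1: domE m = domE φ ⊓ domE ψ
  have hdm : domE m = domE φ ⊓ domE ψ := by
    refine le_antisymm (le_inf ((ba_le _ _).mpr (cle_dom hmφ)) ((ba_le _ _).mpr (cle_dom hmψ))) ?_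
    by_contra hc
    have hne : (domE φ ⊓ domE ψ) \ domE m ≠ ⊥ := by
      intro hb
      exact hc (sdiff_eq_bot_iff.mp hb)
    obtain ⟨x, hx⟩ := exists_char hne
    have hxφ : x ∈ EhatAt φ := char_mono x (sdiff_le.trans inf_le_left) hx
    have hxψ : x ∈ EhatAt ψ := char_mono x (sdiff_le.trans inf_le_right) hx
    have hmem1 : mk φ x hxφ ∈ W := hφW (mk_mem_U hxφ)
    have hmem2 : mk ψ x hxψ ∈ W := hψW (mk_mem_U hxψ)
    have heq : mk φ x hxφ = mk ψ x hxψ :=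
      (hW.2.2 φ ψ x x hxφ hxψ hmem1 hmem2).2.2.1 rfl
    obtain ⟨hxm, -⟩ := mk_eq_meet hxφ hxψ heq
    have hcompl : x.toFun (domE m)ᶜ = true := by
      refine char_mono x ?_ hx
      rw [sdiff_eq]
      exact inf_le_right
    have hxm' : x.toFun (domE m) = true := hxm
    rw [char_compl] at hcompl
    simp [hxm'] at hcompl
  -- Step 2: ranE m = ranE φ ⊓ ranE ψ
  have hrm : ranE m = ranE φ ⊓ ranE ψ := by
    refine le_antisymm (le_inf ((ba_le _ _).mpr (cle_ran hmφ)) ((ba_le _ _).mpr (cle_ran hmψ))) ?_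
    by_contra hc
    have hne : (ranE φ ⊓ ranE ψ) \ ranE m ≠ ⊥ := by
      intro hb
      exact hc (sdiff_eq_bot_iff.mp hb)
    obtain ⟨z, hz⟩ := exists_char hne
    have hzφ : z.toFun (ranE φ) = true := char_mono z (sdiff_le.trans inf_le_left) hz
    have hzψ : z.toFun (ranE ψ) = true := char_mono z (sdiff_le.trans inf_le_right) hz
    have hz1 : z ∈ EhatAt φ⁻¹ := by
      rw [mem_EhatAt_iff, ← ranE_eq_domE_inv]
      exact hzφ
    have hz2 : z ∈ EhatAt ψ⁻¹ := by
      rw [mem_EhatAt_iff, ← ranE_eq_domE_inv]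
      exact hzψ
    set x' := alphaChar φ⁻¹ z hz1 with hx'def
    set y' := alphaChar ψ⁻¹ z hz2 with hy'def
    have hx'φ : x' ∈ EhatAt φ := by
      rw [mem_EhatAt_iff]
      show z.toFun (conjE φ⁻¹ (domE φ)) = true
      rw [conjE_inv_domE]
      exact hzφ
    have hy'ψ : y' ∈ EhatAt ψ := by
      rw [mem_EhatAt_iff]
      show z.toFun (conjE ψ⁻¹ (domE ψ)) = true
      rw [conjE_inv_domE]
      exact hzψ
    have halphax : alphaFun φ x' = z.toFun := by
      funext q
      calc alphaFun φ x' q = z.toFun (conjE φ⁻¹ (conjE φ q)) := rfl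
        _ = z.toFun (q ⊓ ranE φ) := by rw [conj_conj']
        _ = (z.toFun q && z.toFun (ranE φ)) := z.map_inf' _ _
        _ = z.toFun q := by rw [hzφ, Bool.and_true]
    have halphay : alphaFun ψ y' = z.toFun := by
      funext q
      calc alphaFun ψ y' q = z.toFun (conjE ψ⁻¹ (conjE ψ q)) := rfl
        _ = z.toFun (q ⊓ ranE ψ) := by rw [conj_conj']
        _ = (z.toFun q && z.toFun (ranE ψ)) := z.map_inf' _ _
        _ = z.toFun q := by rw [hzψ, Bool.and_true]
    have hmem1 : mk φ x' hx'φ ∈ W := hφW (mk_mem_U hx'φ)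
    have hmem2 : mk ψ y' hy'ψ ∈ W := hψW (mk_mem_U hy'ψ)
    have heq : mk φ x' hx'φ = mk ψ y' hy'ψ :=
      (hW.2.2 φ ψ x' y' hx'φ hy'ψ hmem1 hmem2).2.2.2 (halphax.trans halphay.symm)
    obtain ⟨-, p, hp1, hp2⟩ := (mk_eq_mk_iff hx'φ hy'ψ).mp heq
    have hcle : cle (φ * p.1) m := by
      refine BooleanInverseMonoid.cle_vinf φ ψ _ (cle_mul_idem' φ p.2) ?_
      rw [hp2]
      exact cle_mul_idem' ψ p.2
    have hranle : conjE φ⁻¹ p ≤ ranE m := by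
      rw [← ranE_mul_idem]
      exact (ba_le _ _).mpr (cle_ran hcle)
    have hzp : z.toFun (conjE φ⁻¹ p) = true := hp1
    have hzm : z.toFun (ranE m) = true := char_mono z hranle hzp
    have hcompl : z.toFun (ranE m)ᶜ = true := by
      refine char_mono z ?_ hz
      rw [sdiff_eq]
      exact inf_le_right
    rw [char_compl] at hcompl
    simp [hzm] at hcompl
  -- Step 3: the complementary piece
  set dE : E S := domE ψ \ domE m with hdE
  set ψ' := ψ * (dE : S) with hψ'def
  have hdEle : dE ≤ domE ψ := sdiff_le
  have hφdbot : domE φ ⊓ dE = ⊥ := by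
    have h1 : domE φ ⊓ dE = (domE φ ⊓ domE ψ) ⊓ dE := by
      rw [inf_assoc, inf_eq_right.mpr hdEle]
    rw [h1, ← hdm, hdE]
    exact inf_sdiff_self_right
  have hφd0 : φ * (dE : S) = 0 := by
    have h1 : domE (φ * (dE : S)) = ⊥ := by
      rw [domE_mul_idem]
      exact hφdbot
    have h2 : (φ * (dE : S))⁻¹ * (φ * (dE : S)) = 0 := by
      have := congrArg Subtype.val h1
      rwa [bot_coe] at this
    exact eq_zero_of_dom_zero h2
  have hψ'dom : domE ψ' = dE := by
    rw [hψ'def, domE_mul_idem, inf_eq_right.mpr hdEle]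
  have horth : orth φ ψ' := by
    constructor
    · rw [hψ'def, mul_inv_rev', idem_inv dE.2, ← mul_assoc, hφd0, zmul]
    · have hβ : domE (φ⁻¹ * ψ) = domE m := by
        rw [domE_mul, ← ranE_eq_domE_inv, ← conjE_absorb ψ (ranE φ), ← hrm,
          conjE_ran_of_cle hmψ]
      have h2 : domE ((φ⁻¹ * ψ) * (dE : S)) = ⊥ := by
        rw [domE_mul_idem, hβ, hdE]
        exact inf_sdiff_self_right
      have h3 : (φ⁻¹ * ψ) * (dE : S) = 0 := by
        apply eq_zero_of_dom_zero
        have := congrArg Subtype.val h2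
        rwa [bot_coe] at this
      rw [hψ'def, ← mul_assoc]
      exact h3
  set θ := AdditiveInvSemigroup.vsup φ ψ' with hθdef
  have hθφ : cle φ θ := AdditiveInvSemigroup.cle_vsup_left φ ψ' horth
  have hθψ' : cle ψ' θ := AdditiveInvSemigroup.cle_vsup_right φ ψ' horth
  have hcleψ'ψ : cle ψ' ψ := cle_mul_idem' ψ dE.2
  have hdθ : domE θ = domE φ ⊔ dE := by
    apply Subtype.ext
    show θ⁻¹ * θ = ((domE φ ⊔ dE : E S) : S)
    rw [dom_vsup horth]
    have hc : (ψ'⁻¹ * ψ' : S) = (dE : S) := congrArg Subtype.val hψ'dom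
    rw [hc, sup_coe_of_disj (disjoint_iff.mpr hφdbot)]
    rfl
  refine ⟨θ, ?_⟩
  apply Set.Subset.antisymm
  · rintro g ⟨x, hx, rfl⟩
    have hsplit : (x.toFun (domE φ) || x.toFun dE) = true := by
      have h0 : x.toFun (domE θ) = true := hx
      rw [hdθ, x.map_sup'] at h0
      exact h0
    by_cases hφx : x.toFun (domE φ) = true
    · left
      exact ⟨x, hφx, mk_eq_of_cle hθφ hx hφx⟩
    · right
      have hdx : x.toFun dE = true := by
        simp only [Bool.not_eq_true] at hφx
        rw [hφx, Bool.false_or] at hsplit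
        exact hsplit
      have hxψ' : x ∈ EhatAt ψ' := by
        rw [mem_EhatAt_iff, hψ'dom]
        exact hdx
      have hxψ : x ∈ EhatAt ψ := EhatAt_mono hcleψ'ψ hxψ'
      refine ⟨x, hxψ, ?_⟩
      calc mk θ x hx = mk ψ' x hxψ' := mk_eq_of_cle hθψ' hx hxψ'
        _ = mk ψ x hxψ := (mk_eq_of_cle hcleψ'ψ hxψ hxψ').symm
  · intro g hg
    rcases hg with ⟨x, hxφ, rfl⟩ | ⟨x, hxψ, rfl⟩
    · exact U_mono hθφ (mk_mem_U hxφ)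
    · have hmle : domE m ≤ domE ψ := (ba_le _ _).mpr (cle_dom hmψ)
      have hdsplit : domE ψ = domE m ⊔ dE := by
        rw [hdE]
        exact (sup_sdiff_cancel' le_rfl hmle).symm
      have hsplit : (x.toFun (domE m) || x.toFun dE) = true := by
        have h0 : x.toFun (domE ψ) = true := hxψ
        rw [hdsplit, x.map_sup'] at h0
        exact h0
      by_cases hmx : x.toFun (domE m) = true
      · have hxm : x ∈ EhatAt m := hmx
        have hxφ : x ∈ EhatAt φ := EhatAt_mono hmφ hxm
        have heq2 : mk ψ x hxψ = mk φ x hxφ := by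
          calc mk ψ x hxψ = mk m x hxm := mk_eq_of_cle hmψ hxψ hxm
            _ = mk φ x hxφ := (mk_eq_of_cle hmφ hxφ hxm).symm
        rw [heq2]
        exact U_mono hθφ (mk_mem_U hxφ)
      · have hdx : x.toFun dE = true := by
          simp only [Bool.not_eq_true] at hmx
          rw [hmx, Bool.false_or] at hsplit
          exact hsplit
        have hxψ' : x ∈ EhatAt ψ' := by
          rw [mem_EhatAt_iff, hψ'dom]
          exact hdx
        have heq2 : mk ψ x hxψ = mk ψ' x hxψ' := mk_eq_of_cle hcleψ'ψ hxψ hxψ'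
        rw [heq2]
        exact U_mono hθψ' (mk_mem_U hxψ')

end BisAux

-- AUXMARKER

end BIM

/-- Every compact open bisection of 𝒢(S) is of the form U_ψ; in
particular ε(φ) := U_φ is a semigroup isomorphism from S onto the inverse
semigroup of all compact open bisections of 𝒢(S) (with set-product of
bisections as multiplication). -/
theorem stmt19 {S : Type u} [BooleanInverseMonoid S] :
    -- surjectivity onto compact open bisections
    (∀ W : Set (Gpd S), IsCompactOpenBisection W → ∃ ψ : S, W = U ψ) ∧
    -- each U_ψ is a compact open bisection
    (∀ ψ : S, IsCompactOpenBisection (U (S := S) ψ)) ∧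
    -- injectivity of ε
    (Function.Injective (fun φ : S => U φ)) ∧
    -- multiplicativity of ε: U_φ · U_ψ = U_{φψ}
    (∀ φ ψ : S,
      {g : Gpd S | ∃ (x y : Character S) (_hx : x ∈ EhatAt φ) (_hy : y ∈ EhatAt ψ),
          x.toFun = alphaFun ψ y ∧ ∃ hc : y ∈ EhatAt (φ * ψ), g = mk (φ * ψ) y hc}
        = U (φ * ψ)) := by
  refine ⟨?_, U_isBisection, ?_, ?_⟩
  · -- surjectivity onto compact open bisections
    intro W hW
    classical
    have hcov := fun (i : {g : Gpd S // g ∈ W}) => exists_U_subset hW.2.1 i.1 i.2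
    choose f hf1 hf2 using hcov
    have hsubcov : W ⊆ ⋃ i, U (f i) := fun g hg =>
      Set.mem_iUnion.mpr ⟨⟨g, hg⟩, hf1 ⟨g, hg⟩⟩
    obtain ⟨t, ht⟩ := hW.1.elim_finite_subcover (fun i => U (f i))
      (fun i => U_open (f i)) hsubcov
    have key : ∀ s : Finset {g : Gpd S // g ∈ W},
        ∃ θ : S, (⋃ i ∈ s, U (f i)) = U θ ∧ U θ ⊆ W := by
      intro s
      induction s using Finset.induction_on with
      | empty =>
          refine ⟨0, ?_, ?_⟩
          · rw [U_zero]
            simp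
          · rw [U_zero]
            exact Set.empty_subset _
      | @insert a s ha ih =>
          obtain ⟨θ', h1, h2⟩ := ih
          obtain ⟨θ, hθ⟩ := merge_lemma hW (f a) θ' (hf2 a) h2
          refine ⟨θ, ?_, ?_⟩
          · rw [Finset.set_biUnion_insert, h1, hθ]
          · rw [hθ]
            exact Set.union_subset (hf2 a) h2
    obtain ⟨θ, h1, h2⟩ := key t
    refine ⟨θ, Set.Subset.antisymm ?_ h2⟩
    rw [← h1]
    exact ht
  · -- injectivity
    intro φ ψ h
    have h1 : U φ ⊆ U ψ := le_of_eq h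
    have h2 : U ψ ⊆ U φ := le_of_eq h.symm
    exact cle_antisymm' (cle_of_U_subset h1) (cle_of_U_subset h2)
  · -- multiplicativity
    intro φ ψ
    apply Set.Subset.antisymm
    · rintro g ⟨x, y, hx, hy, hxy, hc, rfl⟩
      exact mk_mem_U hc
    · rintro g ⟨y, hy, rfl⟩
      have hd : domE (φ * ψ) = conjE ψ (domE φ) := domE_mul φ ψ
      have hyfp : y.toFun (domE (φ * ψ)) = true := hy
      have hyψ : y ∈ EhatAt ψ := by
        rw [mem_EhatAt_iff]
        refine char_mono y ?_ hyfp
        rw [hd]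
        exact conjE_le_domE ψ _
      have hxφ : (alphaChar ψ y hyψ) ∈ EhatAt φ := by
        rw [mem_EhatAt_iff]
        show y.toFun (conjE ψ (domE φ)) = true
        rw [← hd]
        exact hyfp
      exact ⟨alphaChar ψ y hyψ, y, hxφ, hyψ, rfl, hy, rfl⟩
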